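/- Let L/K be a finite field extension with G = Aut_K(L). The subalgebra L ⋊ G = ⊕_{g ∈ G} L·g of End_K(L) equals End_{L^G}(L), where L^G is the fixed field of G; in particular L ⋊ G is a simple algebra with center L^G. -/

import Mathlib

set_option maxHeartbeats 1000000
set_option linter.unusedSectionVars false
set_option synthInstance.maxHeartbeats 400000

/-- The skew group algebra `L ⋊ Aut_K(L)`: the subalgebra of `End_K(L)` generated by
the multiplication operators and the `K`-algebra automorphisms of `L`. -/
def skewGroupAlg (K L : Type*) [Field K] [Field L] [Algebra K L] :
    Subalgebra K (Module.End K L) :=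
  Algebra.adjoin K (Set.range ⇑(Algebra.lmul K L) ∪
    Set.range fun g : L ≃ₐ[K] L => (g.toLinearMap : L →ₗ[K] L))

namespace SkewAux

open Module IntermediateField

/-- Transfer of simplicity along a ring equivalence. -/
lemma isSimpleRing_of_ringEquiv {A B : Type*} [Ring A] [Ring B] (e : A ≃+* B)
    [IsSimpleRing B] : IsSimpleRing A := by
  have iso : TwoSidedIdeal A ≃o TwoSidedIdeal B :=
    { toFun := fun I => I.comap (e.symm : B →+* A)
      invFun := fun I => I.comap (e : A →+* B)
      left_inv := fun I => SetLike.ext fun x => by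
        simp [TwoSidedIdeal.mem_comap]
      right_inv := fun I => SetLike.ext fun x => by
        simp [TwoSidedIdeal.mem_comap]
      map_rel_iff' := by
        intro I J
        constructor
        · intro h x hx
          have hx' : e x ∈ I.comap (e.symm : B →+* A) :=
            (TwoSidedIdeal.mem_comap _).mpr (by simpa using hx)
          have h2 : e.symm (e x) ∈ J := (TwoSidedIdeal.mem_comap _).mp (h hx')
          simpa using h2
        · intro h x hx
          exact (TwoSidedIdeal.mem_comap _).mpr (h ((TwoSidedIdeal.mem_comap _).mp hx)) }
  exact ⟨(OrderIso.isSimpleOrder_iff iso).mpr IsSimpleRing.simple⟩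

variable {K L : Type*} [Field K] [Field L] [Algebra K L]

lemma lmul_mem (a : L) : (Algebra.lmul K L a : Module.End K L) ∈ skewGroupAlg K L :=
  Algebra.subset_adjoin (Or.inl ⟨a, rfl⟩)

lemma aut_mem (g : L ≃ₐ[K] L) : (g.toLinearMap : Module.End K L) ∈ skewGroupAlg K L :=
  Algebra.subset_adjoin (Or.inr ⟨g, rfl⟩)

/-- An automorphism of `L/K` as an algebra hom over the fixed field. -/
def toFix (g : L ≃ₐ[K] L) :
    L →ₐ[fixedField (⊤ : Subgroup (L ≃ₐ[K] L))] L :=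
  { (g : L →+* L) with
    commutes' := fun c => c.2 ⟨g, trivial⟩ }

lemma toFix_inj : Function.Injective (toFix (K := K) (L := L)) := fun g g' h => by
  ext x; exact DFunLike.congr_fun h x

lemma li : LinearIndependent L
    (fun g : L ≃ₐ[K] L => (toFix g).toLinearMap) :=
  (linearIndependent_toLinearMap _ L L).comp toFix toFix_inj

variable [FiniteDimensional K L]

lemma fin_inst : Module.Finite L (L →ₗ[fixedField (⊤ : Subgroup (L ≃ₐ[K] L))] L) :=
  Module.Finite.linearMap _ _ _ _

lemma span_top : Submodule.span L
    (Set.range fun g : L ≃ₐ[K] L => (toFix g).toLinearMap) = ⊤ := by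
  classical
  haveI := fin_inst (K := K) (L := L)
  have h1 : finrank L (Submodule.span L
      (Set.range fun g : L ≃ₐ[K] L => (toFix g).toLinearMap)) = Fintype.card (L ≃ₐ[K] L) :=
    finrank_span_eq_card li
  have h2 : finrank L (L →ₗ[fixedField (⊤ : Subgroup (L ≃ₐ[K] L))] L)
      = finrank (fixedField (⊤ : Subgroup (L ≃ₐ[K] L))) L :=
    Module.finrank_linearMap_self _ _ _
  have h3 : finrank (fixedField (⊤ : Subgroup (L ≃ₐ[K] L))) L
      = Fintype.card (L ≃ₐ[K] L) := by
    rw [finrank_fixedField_eq_card]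
    exact (Nat.card_congr (Subgroup.topEquiv (G := L ≃ₐ[K] L)).toEquiv).trans Nat.card_eq_fintype_card
  exact Submodule.eq_top_of_finrank_eq (h1.trans (h3.symm.trans h2.symm))

/-- Every `L^G`-linear endomorphism, viewed as a `K`-linear one, lies in `L ⋊ G`. -/
lemma restrict_mem (f : L →ₗ[fixedField (⊤ : Subgroup (L ≃ₐ[K] L))] L) :
    (f.restrictScalars K : Module.End K L) ∈ skewGroupAlg K L := by
  have hf : f ∈ Submodule.span L
      (Set.range fun g : L ≃ₐ[K] L => (toFix g).toLinearMap) := by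
    rw [span_top]; trivial
  induction hf using Submodule.span_induction with
  | mem x h =>
    obtain ⟨g, rfl⟩ := h
    have : (LinearMap.restrictScalars K (toFix g).toLinearMap) = g.toLinearMap := rfl
    rw [this]; exact aut_mem g
  | zero => exact (skewGroupAlg K L).zero_mem
  | add x y hx hy ihx ihy => exact (skewGroupAlg K L).add_mem ihx ihy
  | smul a x hx ih =>
    have : (LinearMap.restrictScalars K (a • x)) =
        (Algebra.lmul K L a : Module.End K L) * LinearMap.restrictScalars K x := by
      ext z; simp [Module.End.mul_apply]
    rw [this]
    exact (skewGroupAlg K L).mul_mem (lmul_mem a) ih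

/-- The `F`-linear version of a `K`-linear map commuting with multiplications by `F`. -/
def toF (f : Module.End K L)
    (hf : ∀ c : fixedField (⊤ : Subgroup (L ≃ₐ[K] L)), ∀ x : L, f ((c : L) * x) = c * f x) :
    L →ₗ[fixedField (⊤ : Subgroup (L ≃ₐ[K] L))] L where
  toFun := f
  map_add' := f.map_add
  map_smul' := fun c x => by
    have h1 : (c • x : L) = (c : L) * x := rfl
    have h2 : (c • f x : L) = (c : L) * f x := rfl
    simp only [RingHom.id_apply, h1, h2]
    exact hf c x

lemma centralizer_le :
    Subalgebra.centralizer K (Algebra.lmul K L ''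
        ((fixedField (⊤ : Subgroup (L ≃ₐ[K] L))) : Set L)) ≤ skewGroupAlg K L := by
  intro f hf
  rw [Subalgebra.mem_centralizer_iff] at hf
  have hcomm : ∀ c : fixedField (⊤ : Subgroup (L ≃ₐ[K] L)), ∀ x : L,
      f ((c : L) * x) = c * f x := by
    intro c x
    have := hf (Algebra.lmul K L (c : L)) ⟨c, c.2, rfl⟩
    have := DFunLike.congr_fun this x
    simpa [Module.End.mul_apply] using this.symm
  have : f = (toF f hcomm).restrictScalars K := rfl
  rw [this]
  exact restrict_mem _

lemma le_centralizer :
    skewGroupAlg K L ≤ Subalgebra.centralizer K (Algebra.lmul K L ''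
        ((fixedField (⊤ : Subgroup (L ≃ₐ[K] L))) : Set L)) := by
  rw [skewGroupAlg]
  apply Algebra.adjoin_le
  rintro f (⟨a, rfl⟩ | ⟨g, rfl⟩) <;>
    rw [SetLike.mem_coe, Subalgebra.mem_centralizer_iff] <;>
    rintro y ⟨c, hc, rfl⟩ <;> ext x
  · simp [Module.End.mul_apply]; ring
  · have hgc : g c = c := hc ⟨g, trivial⟩
    simp [Module.End.mul_apply, map_mul, hgc]

lemma eq_centralizer :
    skewGroupAlg K L = Subalgebra.centralizer K (Algebra.lmul K L ''
        ((fixedField (⊤ : Subgroup (L ≃ₐ[K] L))) : Set L)) :=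
  le_antisymm le_centralizer centralizer_le

/-- Restriction of scalars as a ring hom from `End_F L` onto the skew group algebra. -/
def Phi : (L →ₗ[fixedField (⊤ : Subgroup (L ≃ₐ[K] L))] L) →+* (skewGroupAlg K L) where
  toFun f := ⟨f.restrictScalars K, restrict_mem f⟩
  map_one' := by ext x; rfl
  map_mul' f g := by ext x; rfl
  map_zero' := by ext x; rfl
  map_add' f g := by ext x; rfl

lemma Phi_bij : Function.Bijective (Phi (K := K) (L := L)) := by
  constructor
  · intro f g h
    apply LinearMap.restrictScalars_injective K
    exact congrArg Subtype.val h
  · rintro ⟨f, hf⟩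
    have hf' := eq_centralizer (K := K) (L := L) ▸ hf
    rw [Subalgebra.mem_centralizer_iff] at hf'
    have hcomm : ∀ c : fixedField (⊤ : Subgroup (L ≃ₐ[K] L)), ∀ x : L,
        f ((c : L) * x) = c * f x := by
      intro c x
      have := hf' (Algebra.lmul K L (c : L)) ⟨c, c.2, rfl⟩
      have := DFunLike.congr_fun this x
      simpa [Module.End.mul_apply] using this.symm
    exact ⟨toF f hcomm, rfl⟩

lemma simple : IsSimpleRing (skewGroupAlg K L) := by
  haveI : IsSimpleRing (L →ₗ[fixedField (⊤ : Subgroup (L ≃ₐ[K] L))] L) := by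
    haveI : Nonempty (Fin (finrank (fixedField (⊤ : Subgroup (L ≃ₐ[K] L))) L)) := by
      rw [Fin.pos_iff_nonempty.symm]
      exact finrank_pos
    exact isSimpleRing_of_ringEquiv
      (algEquivMatrix (finBasis (fixedField (⊤ : Subgroup (L ≃ₐ[K] L))) L)).toRingEquiv
  exact isSimpleRing_of_ringEquiv (RingEquiv.ofBijective Phi Phi_bij).symm

lemma center_eq :
    {f : Module.End K L | f ∈ skewGroupAlg K L ∧ ∀ g ∈ skewGroupAlg K L, f * g = g * f} =
      Algebra.lmul K L ''
        ((fixedField (⊤ : Subgroup (L ≃ₐ[K] L))) : Set L) := by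
  ext f
  constructor
  · rintro ⟨hf, hc⟩
    have hL : ∀ a x : L, f (a * x) = a * f x := by
      intro a x
      have := hc (Algebra.lmul K L a) (lmul_mem a)
      have := DFunLike.congr_fun this x
      simpa [Module.End.mul_apply] using this
    have hfix : f 1 ∈ fixedField (⊤ : Subgroup (L ≃ₐ[K] L)) := by
      rintro ⟨g, -⟩
      have := hc g.toLinearMap (aut_mem g)
      have h1 := DFunLike.congr_fun this (1 : L)
      simp only [Module.End.mul_apply, AlgEquiv.toLinearMap_apply, map_one] at h1
      exact h1.symm
    refine ⟨f 1, hfix, ?_⟩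
    ext x
    have := hL x 1
    simp only [mul_one] at this
    simp [this, mul_comm]
  · rintro ⟨c, hc, rfl⟩
    refine ⟨lmul_mem c, fun g hg => ?_⟩
    have hg' := le_centralizer (K := K) (L := L) hg
    rw [Subalgebra.mem_centralizer_iff] at hg'
    exact (hg' (Algebra.lmul K L c) ⟨c, hc, rfl⟩)

end SkewAux

theorem stmt9 (K L : Type*) [Field K] [Field L] [Algebra K L] [FiniteDimensional K L] :
    skewGroupAlg K L =
      Subalgebra.centralizer K (Algebra.lmul K L ''
        ((IntermediateField.fixedField (⊤ : Subgroup (L ≃ₐ[K] L))) : Set L)) ∧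
    IsSimpleRing (skewGroupAlg K L) ∧
    {f : Module.End K L | f ∈ skewGroupAlg K L ∧ ∀ g ∈ skewGroupAlg K L, f * g = g * f} =
      Algebra.lmul K L ''
        ((IntermediateField.fixedField (⊤ : Subgroup (L ≃ₐ[K] L))) : Set L) := by
  exact ⟨SkewAux.eq_centralizer, SkewAux.simple, SkewAux.center_eq⟩
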